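/- arXiv:0909.5216 — 2 statements merged into one kernel-verified Lean document; each statement's English description precedes it below -/
import Mathlib

section
/- Let d ≥ 4 and let ρ₁,…,ρ_{d−1} ∈ (−1,1)∖{0} satisfy |ρ₁| ≥ |ρ₂| ≥ … ≥ |ρ_{d−1}| and |ρ₁| < ρcrit = 0.63055. For the star on d vertices with correlations ρ₁,…,ρ_{d−1} on its edges, the approximate error exponent reduces to a minimum of only two crossover rates: K̃(star) = min{ J̃(ρ₁, ρ₁·ρ₂), J̃(ρ_{d−1}, ρ_{d−1}·ρ₁) }. -/
noncomputable def Jt (a b : ℝ) : ℝ :=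
  ((1 / 2) * Real.log ((1 - b ^ 2) / (1 - a ^ 2))) ^ 2 /
    (2 * (b ^ 4 + b ^ 2) / (1 - b ^ 2) ^ 2 + 2 * (a ^ 4 + a ^ 2) / (1 - a ^ 2) ^ 2
      - 4 * b ^ 2 * (a ^ 2 + 1) / ((1 - b ^ 2) * (1 - a ^ 2)))

/-- The approximate error exponent K̃(G,ρ): the infimum of J̃(ρ_e, ρ_{e′}) over all
non-edges e′ = {u,v} and all edges e on the (unique) path joining u and v, where the
correlation of the non-edge is the product of the edge correlations along that path. -/
noncomputable def Ktilde {V : Type*} (G : SimpleGraph V) (ρ : Sym2 V → ℝ) : ℝ :=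
  sInf { x : ℝ | ∃ (u v : V) (p : G.Walk u v), p.IsPath ∧ u ≠ v ∧ ¬ G.Adj u v ∧
    ∃ e ∈ p.edges, x = Jt (ρ e) ((p.edges.map ρ).prod) }

/-- The star graph on `Fin d`: the vertex with value 0 is the center. -/
def starGraph (d : ℕ) : SimpleGraph (Fin d) where
  Adj u v := u ≠ v ∧ (u.val = 0 ∨ v.val = 0)
  symm := ⟨by intro u v h; exact ⟨h.1.symm, h.2.symm⟩⟩
  loopless := ⟨by intro u h; exact h.1 rfl⟩

/-- Correlations on the star: the edge {0, v} carries r v. -/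
noncomputable def starRho (d : ℕ) (r : Fin d → ℝ) : Sym2 (Fin d) → ℝ :=
  Sym2.lift ⟨fun u v => if u.val = 0 then r v else if v.val = 0 then r u else 0, by
    intro u v
    dsimp only
    by_cases hu : u.val = 0 <;> by_cases hv : v.val = 0
    · have huv : u = v := Fin.ext (hu.trans hv.symm)
      simp [hu, hv, huv]
    · simp [hu, hv]
    · simp [hu, hv]
    · simp [hu, hv]⟩

/-! ### Auxiliary analytic lemmas -/

lemma mono_bound (u v : ℝ) (hu : 0 ≤ u) (hv : 0 ≤ v) (hu25 : u ≤ 2/5) (hv25 : v ≤ 2/5)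
    (m n a b : ℕ) : u^(m+a)*v^(n+b) ≤ (2/5)^(m+n)*(u^a*v^b) := by
  have h1 : u^m ≤ (2/5)^m := pow_le_pow_left₀ hu hu25 m
  have h2 : v^n ≤ (2/5)^n := pow_le_pow_left₀ hv hv25 n
  calc u^(m+a)*v^(n+b) = (u^m*v^n)*(u^a*v^b) := by ring
  _ ≤ ((2/5)^m*(2/5)^n)*(u^a*v^b) := by
      apply mul_le_mul_of_nonneg_right _ (mul_nonneg (pow_nonneg hu a) (pow_nonneg hv b))
      exact mul_le_mul h1 h2 (pow_nonneg hv n) (pow_nonneg (by norm_num) m)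
  _ = (2/5)^(m+n)*(u^a*v^b) := by rw [pow_add]

set_option maxHeartbeats 1000000 in
set_option maxRecDepth 8000 in
lemma core_poly (s t : ℝ) (hs : 0 ≤ s) (hst : s ≤ t) (ht : t ≤ 2/5) :
    (6*(1-s)^2 - 3*(s*(1-t))*(1-s) + 2*(s*(1-t))^2) * ((1-s^2*t)*(1+3*s-5*s*t+s^2*t))
      < 12*(1+s-3*s*t+s^2*t)*(1-s)^3 := by
  obtain ⟨u, hu, rfl⟩ : ∃ u, 0 ≤ u ∧ t = 2/5 - u := ⟨2/5 - t, by linarith, by ring⟩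
  obtain ⟨v, hv, rfl⟩ : ∃ v, 0 ≤ v ∧ s = 2/5 - u - v := ⟨2/5 - u - s, by linarith, by ring⟩
  have hu25 : u ≤ 2/5 := by linarith
  have hv25 : v ≤ 2/5 := by linarith
  have hb1 : u^1*v^4 ≤ (2/5)^2 * (u^1*v^2) := by simpa using mono_bound u v hu hv hu25 hv25 0 2 1 2
  have hb2 : u^1*v^5 ≤ (2/5)^3 * (u^1*v^2) := by simpa using mono_bound u v hu hv hu25 hv25 0 3 1 2
  have hb3 : u^1*v^6 ≤ (2/5)^4 * (u^1*v^2) := by simpa using mono_bound u v hu hv hu25 hv25 0 4 1 2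
  have hb4 : u^2*v^3 ≤ (2/5)^2 * (u^1*v^2) := by simpa using mono_bound u v hu hv hu25 hv25 1 1 1 2
  have hb5 : u^2*v^4 ≤ (2/5)^3 * (u^2*v^1) := by simpa using mono_bound u v hu hv hu25 hv25 0 3 2 1
  have hb6 : u^3*v^2 ≤ (2/5)^2 * (u^1*v^2) := by simpa using mono_bound u v hu hv hu25 hv25 2 0 1 2
  have hb7 : u^3*v^3 ≤ (2/5)^3 * (u^2*v^1) := by simpa using mono_bound u v hu hv hu25 hv25 1 2 2 1
  have hb8 : u^4*v^0 ≤ (2/5)^1 * (u^3*v^0) := by simpa using mono_bound u v hu hv hu25 hv25 1 0 3 0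
  have hb9 : u^4*v^1 ≤ (2/5)^2 * (u^2*v^1) := by simpa using mono_bound u v hu hv hu25 hv25 2 0 2 1
  have hb10 : u^4*v^2 ≤ (2/5)^3 * (u^2*v^1) := by simpa using mono_bound u v hu hv hu25 hv25 2 1 2 1
  have hb11 : u^5*v^0 ≤ (2/5)^2 * (u^3*v^0) := by simpa using mono_bound u v hu hv hu25 hv25 2 0 3 0
  have hb12 : u^5*v^1 ≤ (2/5)^3 * (u^2*v^1) := by simpa using mono_bound u v hu hv hu25 hv25 3 0 2 1
  have hb13 : u^6*v^0 ≤ (2/5)^3 * (u^3*v^0) := by simpa using mono_bound u v hu hv hu25 hv25 3 0 3 0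
  linarith [hb1, hb2, hb3, hb4, hb5, hb6, hb7, hb8, hb9, hb10, hb11, hb12, hb13, mul_nonneg (pow_nonneg hu 0) (pow_nonneg hv 1), mul_nonneg (pow_nonneg hu 0) (pow_nonneg hv 2), mul_nonneg (pow_nonneg hu 0) (pow_nonneg hv 3), mul_nonneg (pow_nonneg hu 0) (pow_nonneg hv 4), mul_nonneg (pow_nonneg hu 0) (pow_nonneg hv 5), mul_nonneg (pow_nonneg hu 0) (pow_nonneg hv 6), mul_nonneg (pow_nonneg hu 1) (pow_nonneg hv 0), mul_nonneg (pow_nonneg hu 1) (pow_nonneg hv 1), mul_nonneg (pow_nonneg hu 1) (pow_nonneg hv 2), mul_nonneg (pow_nonneg hu 1) (pow_nonneg hv 3), mul_nonneg (pow_nonneg hu 2) (pow_nonneg hv 0), mul_nonneg (pow_nonneg hu 2) (pow_nonneg hv 1), mul_nonneg (pow_nonneg hu 2) (pow_nonneg hv 2), mul_nonneg (pow_nonneg hu 2) (pow_nonneg hv 5), mul_nonneg (pow_nonneg hu 2) (pow_nonneg hv 6), mul_nonneg (pow_nonneg hu 3) (pow_nonneg hv 0), mul_nonneg (pow_nonneg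 hu 3) (pow_nonneg hv 1), mul_nonneg (pow_nonneg hu 3) (pow_nonneg hv 4), mul_nonneg (pow_nonneg hu 3) (pow_nonneg hv 5), mul_nonneg (pow_nonneg hu 3) (pow_nonneg hv 6), mul_nonneg (pow_nonneg hu 4) (pow_nonneg hv 3), mul_nonneg (pow_nonneg hu 4) (pow_nonneg hv 4), mul_nonneg (pow_nonneg hu 4) (pow_nonneg hv 5), mul_nonneg (pow_nonneg hu 4) (pow_nonneg hv 6), mul_nonneg (pow_nonneg hu 5) (pow_nonneg hv 2), mul_nonneg (pow_nonneg hu 5) (pow_nonneg hv 3), mul_nonneg (pow_nonneg hu 5) (pow_nonneg hv 4), mul_nonneg (pow_nonneg hu 5) (pow_nonneg hv 5), mul_nonneg (pow_nonneg hu 6) (pow_nonneg hv 1), mul_nonneg (pow_nonneg hu 6) (pow_nonneg hv 2), mul_nonneg (pow_nonneg hu 6) (pow_nonneg hv 3), mul_nonneg (pow_nonneg hu 6) (pow_nonneg hv 4), mul_nonneg (pow_nonneg hu 7) (pow_nonneg hv 0), mul_nonneg (pow_nonneg hu 7) (pow_nonneg hv 1), mul_nonneg (pow_nonneg hu 7)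 (pow_nonneg hv 2), mul_nonneg (pow_nonneg hu 7) (pow_nonneg hv 3), mul_nonneg (pow_nonneg hu 8) (pow_nonneg hv 0), mul_nonneg (pow_nonneg hu 8) (pow_nonneg hv 1), mul_nonneg (pow_nonneg hu 8) (pow_nonneg hv 2), mul_nonneg (pow_nonneg hu 9) (pow_nonneg hv 0), mul_nonneg (pow_nonneg hu 9) (pow_nonneg hv 1), mul_nonneg (pow_nonneg hu 10) (pow_nonneg hv 0)]

lemma log_le_cubic (x : ℝ) (hx : 0 ≤ x) : Real.log (1+x) ≤ x - x^2/2 + x^3/3 := by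
  have key : ∀ y ∈ Set.Ici (0:ℝ), HasDerivAt (fun z => z - z^2/2 + z^3/3 - Real.log (1+z))
      (1 - y + y^2 - 1/(1+y)) y := by
    intro y hy
    have hy1 : (0:ℝ) < 1 + y := by simp at hy; linarith
    have h1 : HasDerivAt (fun z : ℝ => 1 + z) 1 y := by
      simpa using (hasDerivAt_id y).const_add 1
    have hlog : HasDerivAt (fun z : ℝ => Real.log (1+z)) (1/(1+y)) y := by
      simpa using h1.log (ne_of_gt hy1)
    have hpoly : HasDerivAt (fun z : ℝ => z - z^2/2 + z^3/3) (1 - y + y^2) y := by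
      have := ((hasDerivAt_id y).sub ((hasDerivAt_pow 2 y).div_const 2)).add
        ((hasDerivAt_pow 3 y).div_const 3)
      refine this.congr_deriv ?_
      norm_num
    exact hpoly.sub hlog
  have mono : MonotoneOn (fun z : ℝ => z - z^2/2 + z^3/3 - Real.log (1+z)) (Set.Ici 0) := by
    apply monotoneOn_of_deriv_nonneg (convex_Ici 0)
    · exact ContinuousOn.sub (by fun_prop) (ContinuousOn.log (by fun_prop)
        (fun y hy => by simp at hy; intro h; nlinarith))
    · intro y hy
      exact ((key y (interior_subset hy)).differentiableAt).differentiableWithinAt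
    · intro y hy
      rw [interior_Ici] at hy
      rw [(key y (Set.mem_Ici.mpr (le_of_lt (Set.mem_Ioi.mp hy)))).deriv]
      have hy1 : (0:ℝ) < 1 + y := by linarith [Set.mem_Ioi.mp hy]
      have hrw : 1 - y + y^2 - 1/(1+y) = y^3/(1+y) := by field_simp; ring
      rw [hrw]
      have hy0 : 0 < y := Set.mem_Ioi.mp hy
      positivity
  have h0 : (fun z : ℝ => z - z^2/2 + z^3/3 - Real.log (1+z)) 0 ≤ _ :=
    mono (Set.self_mem_Ici) hx hx
  simp at h0
  linarith

noncomputable def Phi (s t : ℝ) : ℝ :=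
  (Real.log ((1 - s*t) / (1 - s)))^2 /
    (8 * (s*(1-t)/((1-s)*(1-s*t))) * (2 * (s*(1-t)/((1-s)*(1-s*t))) + 1))

lemma Jt_eq (a b : ℝ) (ha0 : a ≠ 0) (ha : a^2 < 1) (hb : b^2 < 1) :
    Jt a (a*b) = Phi (a^2) (b^2) := by
  have ha2 : (0:ℝ) < 1 - a^2 := by linarith
  have hab2 : a^2*b^2 < 1 := by nlinarith [sq_nonneg a, sq_nonneg b]
  have hab : (0:ℝ) < 1 - a^2*b^2 := by linarith
  have hd : (0:ℝ) < a^2*(1-b^2) := by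
    have := sq_nonneg a
    have ha2p : 0 < a^2 := by positivity
    nlinarith
  rw [Jt, Phi]
  have e1 : (1 - (a*b)^2) = 1 - a^2*b^2 := by ring
  rw [e1]
  rw [div_eq_div_iff]
  · field_simp
    ring
  · have hB : 2 * ((a*b) ^ 4 + (a*b) ^ 2) / (1 - a^2*b^2) ^ 2 + 2 * (a ^ 4 + a ^ 2) / (1 - a ^ 2) ^ 2
      - 4 * (a*b) ^ 2 * (a ^ 2 + 1) / ((1 - a^2*b^2) * (1 - a ^ 2))
      = (2*(a^2*(1-b^2)/((1-a^2)*(1-a^2*b^2)))*(2*(a^2*(1-b^2)/((1-a^2)*(1-a^2*b^2)))+1)) := by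
      field_simp
      ring
    rw [hB]
    positivity
  · positivity

lemma Phi_eq (s τ : ℝ) (hs0 : 0 < s) (hs1 : s < 1) (hτ1 : τ < 1) :
    Phi s τ = (Real.log (1/(1-s)) - Real.log (1/(1-s*τ)))^2 /
      (8 * (1/(1-s) - 1/(1-s*τ)) * (2 * (1/(1-s) - 1/(1-s*τ)) + 1)) := by
  have h1 : (0:ℝ) < 1 - s := by linarith
  have h2 : s*τ < 1 := by nlinarith
  have h2' : (0:ℝ) < 1 - s*τ := by linarith
  rw [Phi]
  have e1 : (1 - s*τ)/(1 - s) = (1/(1-s))/(1/(1-s*τ)) := by field_simp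
  have e2 : Real.log ((1 - s*τ)/(1 - s)) = Real.log (1/(1-s)) - Real.log (1/(1-s*τ)) := by
    rw [e1, Real.log_div (by positivity) (by positivity)]
  have e3 : s*(1-τ)/((1-s)*(1-s*τ)) = 1/(1-s) - 1/(1-s*τ) := by field_simp; ring
  rw [e2, e3]

lemma PhiL1 (s t t' : ℝ) (hs0 : 0 < s) (hs1 : s < 1) (ht0 : 0 < t) (htt : t ≤ t')
    (ht1 : t' < 1) : Phi s t' ≤ Phi s t := by
  have h1 : (0:ℝ) < 1 - s := by linarith
  have hst : s*t < 1 := by nlinarith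
  have hst' : s*t' < 1 := by nlinarith
  have h1t : (0:ℝ) < 1 - s*t := by linarith
  have h1t' : (0:ℝ) < 1 - s*t' := by linarith
  rw [Phi_eq s t hs0 hs1 (lt_of_le_of_lt htt ht1), Phi_eq s t' hs0 hs1 ht1]
  set C := 1/(1-s) with hC
  set A := 1/(1-s*t) with hA
  set B := 1/(1-s*t') with hB
  have hA0 : 0 < A := by rw [hA]; positivity
  have hB0 : 0 < B := by rw [hB]; positivity
  have hAB : A ≤ B := by
    rw [hA, hB]
    apply one_div_le_one_div_of_le (by linarith) (by nlinarith)
  have hBC : B < C := by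
    rw [hB, hC]
    apply one_div_lt_one_div_of_lt (by linarith) (by nlinarith)
  have k1 : Real.log C - Real.log B ≤ (C-B)/B := by
    have h := Real.log_le_sub_one_of_pos (show 0 < C/B by positivity)
    rw [Real.log_div (by positivity) (by positivity)] at h
    have e : C/B - 1 = (C-B)/B := by field_simp
    rw [e] at h; exact h
  have k2 : (B-A)/B ≤ Real.log B - Real.log A := by
    have h := Real.log_le_sub_one_of_pos (show 0 < A/B by positivity)
    rw [Real.log_div (by positivity) (by positivity)] at h
    have e : A/B - 1 = -((B-A)/B) := by field_simp; ring
    rw [e] at h; linarith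
  have hLB : 0 ≤ Real.log C - Real.log B := by
    have := Real.log_le_log hB0 (le_of_lt hBC)
    linarith
  have hLL : 0 ≤ Real.log B - Real.log A := by
    have := Real.log_le_log hA0 hAB
    linarith
  set LB := Real.log C - Real.log B with hLBdef
  set LA' := Real.log C - Real.log A with hLAdef
  have hLALB : LB ≤ LA' := by rw [hLBdef, hLAdef]; linarith
  have hLA0 : 0 ≤ LA' := le_trans hLB hLALB
  set dB := C - B with hdB
  set dA := C - A with hdA
  have hdB0 : 0 < dB := by rw [hdB]; linarith
  have hdA0 : 0 < dA := by rw [hdA]; linarith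
  have slope : LB * dA ≤ LA' * dB := by
    have p1 : LB * (B - A) ≤ (C-B)/B * (B-A) := mul_le_mul_of_nonneg_right k1 (by linarith)
    have p2 : (B-A)/B * (C-B) ≤ (Real.log B - Real.log A) * (C-B) :=
      mul_le_mul_of_nonneg_right k2 (by linarith)
    have e : (C-B)/B * (B-A) = (B-A)/B * (C-B) := by ring
    have : LA' = LB + (Real.log B - Real.log A) := by rw [hLAdef, hLBdef]; ring
    rw [this, hdA, hdB]
    nlinarith
  rw [div_le_div_iff₀ (by positivity) (by positivity)]
  have f1 : (LB*dA)^2 ≤ (LA'*dB)^2 :=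
    mul_self_le_mul_self (by positivity) slope |>.trans_eq (by ring) |>.trans_eq' (by ring)
  have f2 : LB^2*dA ≤ LA'^2*dB := by
    calc LB^2*dA = LB*(LB*dA) := by ring
    _ ≤ LB*(LA'*dB) := mul_le_mul_of_nonneg_left slope hLB
    _ ≤ LA'*(LA'*dB) := mul_le_mul_of_nonneg_right hLALB (by positivity)
    _ = LA'^2*dB := by ring
  nlinarith [f1, f2]

lemma key_num (Lv a c e D : ℝ) (hD : D ≠ 0) :
    2*Lv*(c/D) * (8*(a/D)*(2*(a/D)+1)) - Lv^2*(8*(c*e/D^2)*(2*(a/D)+1) + 8*(a/D)*(2*(c*e/D^2)))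
      = 8*Lv*c*(2*a*(2*a+D) - Lv*e*(4*a+D))/D^3 := by
  field_simp
  ring

lemma num_pos (t x : ℝ) (ht : t ≤ 2/5) (hx0 : 0 < x) (hxlt : x < t) :
    0 < 8*(Real.log (1-x*t) - Real.log (1-x))*(1-t) *
      (2*(x*(1-t))*(2*(x*(1-t))+((1-x)*(1-x*t)))
        - (Real.log (1-x*t) - Real.log (1-x))*(1-x^2*t)*(4*(x*(1-t))+((1-x)*(1-x*t)))) := by
  have hx1 : x < 1 := by linarith
  have hm : (0:ℝ) < 1 - x := by linarith
  have ht1 : t < 1 := by linarith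
  have ht0 : 0 < t := lt_trans hx0 hxlt
  have hxt1 : x*t < 1 := by nlinarith
  have hn : (0:ℝ) < 1 - x*t := by linarith
  set Lv := Real.log (1-x*t) - Real.log (1-x) with hLv
  have hLpos : 0 < Lv := by
    rw [hLv]
    have h1 : 1 - x < 1 - x*t := by nlinarith
    linarith [Real.log_lt_log hm h1]
  have hPos1 : (0:ℝ) < 1 - x^2*t := by nlinarith
  have hPos2 : (0:ℝ) < 1+3*x-5*x*t+x^2*t := by nlinarith
  have hxx0 : (0:ℝ) ≤ x*(1-t)/(1-x) := div_nonneg (by nlinarith) (le_of_lt hm)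
  have hlogb : Lv ≤ (x*(1-t)/(1-x)) - (x*(1-t)/(1-x))^2/2 + (x*(1-t)/(1-x))^3/3 := by
    have e1 : (1:ℝ) + x*(1-t)/(1-x) = (1-x*t)/(1-x) := by field_simp; ring
    have e2 : Lv = Real.log ((1-x*t)/(1-x)) := by
      rw [hLv, Real.log_div (ne_of_gt hn) (ne_of_gt hm)]
    rw [e2, ← e1]
    exact log_le_cubic _ hxx0
  have core := core_poly x t (le_of_lt hx0) (le_of_lt hxlt) ht
  have hP3 : ((x*(1-t)/(1-x)) - (x*(1-t)/(1-x))^2/2 + (x*(1-t)/(1-x))^3/3)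
      * ((1-x^2*t)*(1+3*x-5*x*t+x^2*t)) < 2*(x*(1-t))*(1+x-3*x*t+x^2*t) := by
    have hmul := mul_lt_mul_of_pos_right core
      (show (0:ℝ) < x*(1-t)/(6*(1-x)^3) by
        apply div_pos (mul_pos hx0 (by linarith)); positivity)
    have e1 : (6*(1-x)^2 - 3*(x*(1-t))*(1-x) + 2*(x*(1-t))^2)
        * ((1-x^2*t)*(1+3*x-5*x*t+x^2*t)) * (x*(1-t)/(6*(1-x)^3))
        = ((x*(1-t)/(1-x)) - (x*(1-t)/(1-x))^2/2 + (x*(1-t)/(1-x))^3/3)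
          * ((1-x^2*t)*(1+3*x-5*x*t+x^2*t)) := by
      field_simp
      ring
    have e2 : 12*(1+x-3*x*t+x^2*t)*(1-x)^3 * (x*(1-t)/(6*(1-x)^3))
        = 2*(x*(1-t))*(1+x-3*x*t+x^2*t) := by
      field_simp
      ring
    rw [e1, e2] at hmul
    exact hmul
  have hmul2 := mul_le_mul_of_nonneg_right hlogb (le_of_lt (mul_pos hPos1 hPos2))
  have hCLEAR : 0 < 2*(x*(1-t))*(1+x-3*x*t+x^2*t)
      - Lv*((1-x^2*t)*(1+3*x-5*x*t+x^2*t)) := sub_pos.mpr (lt_of_le_of_lt hmul2 hP3)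
  have hbr : 0 < 2*(x*(1-t))*(2*(x*(1-t))+((1-x)*(1-x*t)))
      - Lv*(1-x^2*t)*(4*(x*(1-t))+((1-x)*(1-x*t))) := by
    have e3 : 2*(x*(1-t))*(2*(x*(1-t))+((1-x)*(1-x*t)))
          - Lv*(1-x^2*t)*(4*(x*(1-t))+((1-x)*(1-x*t)))
        = 2*(x*(1-t))*(1+x-3*x*t+x^2*t) - Lv*((1-x^2*t)*(1+3*x-5*x*t+x^2*t)) := by
      ring
    rw [e3]
    exact hCLEAR
  exact mul_pos (mul_pos (by linarith : (0:ℝ) < 8*Lv) (by linarith : (0:ℝ) < 1-t)) hbr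

lemma g_deriv (t x : ℝ) (ht0 : 0 < t) (ht : t ≤ 2/5) (hx0 : 0 < x) (hxt : x ≤ t) :
    ∃ E, HasDerivAt (fun y => (Real.log (1-y*t) - Real.log (1-y))^2 /
      (8 * (y*(1-t)/((1-y)*(1-y*t))) * (2 * (y*(1-t)/((1-y)*(1-y*t))) + 1))) E x ∧
      (x < t → 0 < E) := by
  have hx1 : x < 1 := by linarith
  have hm : (0:ℝ) < 1 - x := by linarith
  have hxt1 : x*t < 1 := by nlinarith
  have hn : (0:ℝ) < 1 - x*t := by linarith
  have hD : (0:ℝ) < (1-x)*(1-x*t) := mul_pos hm hn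
  have ht1 : t < 1 := by linarith
  have hδ0 : (0:ℝ) < x*(1-t)/((1-x)*(1-x*t)) :=
    div_pos (mul_pos hx0 (by linarith)) hD
  have hH0 : (0:ℝ) < 8 * (x*(1-t)/((1-x)*(1-x*t))) * (2 * (x*(1-t)/((1-x)*(1-x*t))) + 1) :=
    mul_pos (by linarith) (by linarith)
  have hd1 : HasDerivAt (fun y : ℝ => 1 - y*t) (-t) x := by
    simpa using HasDerivAt.const_sub 1 ((hasDerivAt_id x).mul_const t)
  have hd2 : HasDerivAt (fun y : ℝ => 1 - y) (-1) x := by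
    simpa using HasDerivAt.const_sub 1 (hasDerivAt_id x)
  have hlog1 : HasDerivAt (fun y : ℝ => Real.log (1-y*t)) (-t/(1-x*t)) x :=
    hd1.log (ne_of_gt hn)
  have hlog2 : HasDerivAt (fun y : ℝ => Real.log (1-y)) (-1/(1-x)) x :=
    hd2.log (ne_of_gt hm)
  have hL : HasDerivAt (fun y : ℝ => Real.log (1-y*t) - Real.log (1-y))
      ((1-t)/((1-x)*(1-x*t))) x := by
    refine (hlog1.sub hlog2).congr_deriv ?_
    rw [div_sub_div _ _ (ne_of_gt hn) (ne_of_gt hm), mul_comm ((1:ℝ)-x) (1-x*t)]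
    congr 1
    ring
  have hN : HasDerivAt (fun y : ℝ => (Real.log (1-y*t) - Real.log (1-y))^2)
      (2*(Real.log (1-x*t) - Real.log (1-x))*((1-t)/((1-x)*(1-x*t)))) x := by
    refine (hL.pow 2).congr_deriv ?_
    norm_num
  have hq : HasDerivAt (fun y : ℝ => y*(1-t)) (1*(1-t)) x := (hasDerivAt_id x).mul_const (1-t)
  have hden := hd2.mul hd1
  have hδ : HasDerivAt (fun y : ℝ => y*(1-t)/((1-y)*(1-y*t)))
      ((1-t)*(1-x^2*t)/((1-x)*(1-x*t))^2) x := by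
    refine (hq.div hden (ne_of_gt hD)).congr_deriv ?_
    simp only [Pi.mul_apply]
    congr 1
    ring
  have hH := (hδ.const_mul (8:ℝ)).mul ((hδ.const_mul (2:ℝ)).add_const 1)
  have hg := hN.div hH (ne_of_gt hH0)
  refine ⟨_, hg, ?_⟩
  intro hxlt
  simp only [Pi.mul_apply]
  rw [key_num (Real.log (1-x*t) - Real.log (1-x)) (x*(1-t)) (1-t) (1-x^2*t)
    ((1-x)*(1-x*t)) (ne_of_gt hD)]
  exact div_pos (div_pos (num_pos t x ht hx0 hxlt) (pow_pos hD 3)) (pow_pos hH0 2)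

lemma PhiL2 (s₁ s₂ t : ℝ) (h0 : 0 < s₁) (h12 : s₁ ≤ s₂) (h2t : s₂ ≤ t) (ht : t ≤ 2/5) :
    Phi s₁ t ≤ Phi s₂ t := by
  have ht0 : 0 < t := lt_of_lt_of_le (lt_of_lt_of_le h0 h12) h2t
  set g : ℝ → ℝ := fun y => (Real.log (1-y*t) - Real.log (1-y))^2 /
      (8 * (y*(1-t)/((1-y)*(1-y*t))) * (2 * (y*(1-t)/((1-y)*(1-y*t))) + 1)) with hgdef
  have hmono : StrictMonoOn g (Set.Ioc 0 t) := by
    apply strictMonoOn_of_deriv_pos (convex_Ioc 0 t)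
    · intro x hx
      obtain ⟨E, hE, _⟩ := g_deriv t x ht0 ht hx.1 hx.2
      exact hE.continuousAt.continuousWithinAt
    · intro x hx
      rw [interior_Ioc] at hx
      obtain ⟨E, hE, hpos⟩ := g_deriv t x ht0 ht hx.1 (le_of_lt hx.2)
      rw [hE.deriv]
      exact hpos hx.2
  have hPhig : ∀ s, 0 < s → s ≤ t → Phi s t = g s := by
    intro s hs0 hst
    have hs1 : s < 1 := by linarith
    have hm : (0:ℝ) < 1 - s := by linarith
    have hst1 : s*t < 1 := by nlinarith
    have hn : (0:ℝ) < 1 - s*t := by linarith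
    rw [Phi, hgdef]
    rw [Real.log_div (ne_of_gt hn) (ne_of_gt hm)]
  rw [hPhig s₁ h0 (le_trans h12 h2t), hPhig s₂ (lt_of_lt_of_le h0 h12) h2t]
  rcases eq_or_lt_of_le h12 with rfl | hlt
  · exact le_refl _
  · exact le_of_lt (hmono (Set.mem_Ioc.mpr ⟨h0, le_trans h12 h2t⟩)
      (Set.mem_Ioc.mpr ⟨lt_of_lt_of_le h0 h12, h2t⟩) hlt)

/-! ### Combinatorial lemmas about the star -/

lemma starRho_eval1 (d : ℕ) (r : Fin d → ℝ) (u w : Fin d) (hu : u.val ≠ 0) (hw : w.val = 0) :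
    starRho d r s(u, w) = r u := by
  simp [starRho, hu, hw]

lemma starRho_eval2 (d : ℕ) (r : Fin d → ℝ) (w v : Fin d) (hw : w.val = 0) :
    starRho d r s(w, v) = r v := by
  simp [starRho, hw]

lemma star_mem_class (d : ℕ) (r : Fin d → ℝ) (x : ℝ)
    (hx : x ∈ { x : ℝ | ∃ (u v : Fin d) (p : (starGraph d).Walk u v), p.IsPath ∧ u ≠ v ∧
      ¬ (starGraph d).Adj u v ∧ ∃ e ∈ p.edges, x = Jt (starRho d r e) ((p.edges.map (starRho d r)).prod) }) :
    ∃ u v : Fin d, u.val ≠ 0 ∧ v.val ≠ 0 ∧ u ≠ v ∧ x = Jt (r u) (r u * r v) := by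
  obtain ⟨u, v, p, hp, huv, hnadj, e, he, hxe⟩ := hx
  have hu0 : u.val ≠ 0 ∧ v.val ≠ 0 := by
    by_contra hc
    push_neg at hc
    apply hnadj
    refine ⟨huv, ?_⟩
    by_cases h : u.val = 0
    · exact Or.inl h
    · exact Or.inr (hc h)
  obtain ⟨hu0, hv0⟩ := hu0
  cases p with
  | nil => exact absurd rfl huv
  | @cons _ w _ h q =>
    have hw0 : w.val = 0 := by
      rcases h.2 with h' | h'
      · exact absurd h' hu0
      · exact h'
    cases q with
    | nil => exact absurd hw0 hv0
    | @cons _ y _ h' q' =>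
      have hy0 : y.val ≠ 0 := by
        intro hy
        exact h'.1 (Fin.ext (hw0.trans hy.symm))
      cases q' with
      | nil =>
        have hedges : (SimpleGraph.Walk.cons h (SimpleGraph.Walk.cons h' SimpleGraph.Walk.nil)).edges
            = [s(u, w), s(w, v)] := by
          simp
        rw [hedges] at he hxe
        have hρ1 : starRho d r s(u, w) = r u := starRho_eval1 d r u w hu0 hw0
        have hρ2 : starRho d r s(w, v) = r v := starRho_eval2 d r w v hw0
        simp only [List.map_cons, List.map_nil, List.prod_cons, List.prod_nil, hρ1, hρ2,
          mul_one] at hxe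
        rcases List.mem_pair.mp he with rfl | rfl
        · exact ⟨u, v, hu0, hv0, huv, by rw [hxe, hρ1]⟩
        · exact ⟨v, u, hv0, hu0, huv.symm, by rw [hxe, hρ2, mul_comm]⟩
      | @cons _ z _ h'' q'' =>
        exfalso
        have hz0 : z.val = 0 := by
          rcases h''.2 with h3 | h3
          · exact absurd h3 hy0
          · exact h3
        have hzw : z = w := Fin.ext (hz0.trans hw0.symm)
        rw [SimpleGraph.Walk.cons_isPath_iff] at hp
        obtain ⟨hp2, hup⟩ := hp
        rw [SimpleGraph.Walk.cons_isPath_iff] at hp2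
        obtain ⟨hp3, hwp⟩ := hp2
        apply hwp
        rw [SimpleGraph.Walk.support_cons]
        rw [← hzw]
        exact List.mem_cons_of_mem _ (SimpleGraph.Walk.start_mem_support q'')

lemma star_pair_mem (d : ℕ) (r : Fin d → ℝ) (hd : 4 ≤ d) (u v : Fin d)
    (hu : u.val ≠ 0) (hv : v.val ≠ 0) (huv : u ≠ v) :
    Jt (r u) (r u * r v) ∈ { x : ℝ | ∃ (u v : Fin d) (p : (starGraph d).Walk u v), p.IsPath ∧ u ≠ v ∧
      ¬ (starGraph d).Adj u v ∧ ∃ e ∈ p.edges, x = Jt (starRho d r e) ((p.edges.map (starRho d r)).prod) } := by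
  set z : Fin d := ⟨0, by omega⟩ with hz
  have huz : u ≠ z := by
    intro h; apply hu; rw [h]
  have hvz : v ≠ z := by
    intro h; apply hv; rw [h]
  have h1 : (starGraph d).Adj u z := ⟨huz, Or.inr rfl⟩
  have h2 : (starGraph d).Adj z v := ⟨fun h => hvz h.symm, Or.inl rfl⟩
  refine ⟨u, v, SimpleGraph.Walk.cons h1 (SimpleGraph.Walk.cons h2 SimpleGraph.Walk.nil), ?_, huv, ?_, ?_⟩
  · rw [SimpleGraph.Walk.isPath_def]
    simp [SimpleGraph.Walk.support_cons]
    exact ⟨⟨huz, huv⟩, fun h => hvz h.symm⟩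
  · intro hadj
    rcases hadj.2 with h3 | h3
    · exact hu h3
    · exact hv h3
  · have hρ1 : starRho d r s(u, z) = r u := starRho_eval1 d r u z hu rfl
    have hρ2 : starRho d r s(z, v) = r v := starRho_eval2 d r z v rfl
    refine ⟨s(u, z), by simp, ?_⟩
    simp only [SimpleGraph.Walk.edges_cons, SimpleGraph.Walk.edges_nil, List.map_cons,
      List.map_nil, List.prod_cons, List.prod_nil, hρ1, hρ2, mul_one]

/-- For the star with correlations sorted in decreasing order of magnitude
(|ρ₁| ≥ … ≥ |ρ_{d−1}|, edge {0,v} carrying r v) and |ρ₁| < ρcrit = 0.63055,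
the approximate error exponent is the minimum of only two crossover rates:
K̃(star) = min{J̃(ρ₁, ρ₁ρ₂), J̃(ρ_{d−1}, ρ_{d−1}ρ₁)}. -/
theorem star_two_rates (d : ℕ) (hd : 4 ≤ d) (r : Fin d → ℝ)
    (hr : ∀ v : Fin d, v.val ≠ 0 → r v ∈ Set.Ioo (-1 : ℝ) 1 ∧ r v ≠ 0)
    (hsort : ∀ v w : Fin d, 0 < v.val → v ≤ w → |r w| ≤ |r v|)
    (hcrit : |r ⟨1, by omega⟩| < 0.63055) :
    Ktilde (starGraph d) (starRho d r)
      = min (Jt (r ⟨1, by omega⟩) (r ⟨1, by omega⟩ * r ⟨2, by omega⟩))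
            (Jt (r ⟨d - 1, by omega⟩) (r ⟨d - 1, by omega⟩ * r ⟨1, by omega⟩)) := by
  have hd1 : 1 < d := by omega
  have hd2 : 2 < d := by omega
  have hdd : d - 1 < d := by omega
  set i1 : Fin d := ⟨1, by omega⟩ with hi1
  set i2 : Fin d := ⟨2, by omega⟩ with hi2
  set id1 : Fin d := ⟨d - 1, by omega⟩ with hid1
  have hi1v : i1.val ≠ 0 := by simp [hi1]
  have hi2v : i2.val ≠ 0 := by simp [hi2]
  have hid1v : id1.val ≠ 0 := by simp [hid1]; omega
  -- basic facts about r
  have hrne : ∀ v : Fin d, v.val ≠ 0 → r v ≠ 0 := fun v hv => (hr v hv).2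
  have hsq1 : ∀ v : Fin d, v.val ≠ 0 → (r v)^2 < 1 := by
    intro v hv
    obtain ⟨⟨h1, h2⟩, _⟩ := hr v hv
    nlinarith
  have hsqpos : ∀ v : Fin d, v.val ≠ 0 → 0 < (r v)^2 := by
    intro v hv
    exact lt_of_le_of_ne (sq_nonneg _) (Ne.symm (pow_ne_zero 2 (hrne v hv)))
  have hsqle : ∀ v w : Fin d, 0 < v.val → v ≤ w → (r w)^2 ≤ (r v)^2 := by
    intro v w hv hvw
    have := hsort v w hv hvw
    calc (r w)^2 = |r w|^2 := (sq_abs _).symm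
    _ ≤ |r v|^2 := by nlinarith [abs_nonneg (r w), abs_nonneg (r v)]
    _ = (r v)^2 := sq_abs _
  have ht25 : (r i1)^2 ≤ 2/5 := by
    have h := hcrit
    have : (r i1)^2 = |r i1|^2 := (sq_abs _).symm
    rw [this]
    nlinarith [abs_nonneg (r i1)]
  -- the three conversion equalities
  have e1 : Jt (r i1) (r i1 * r i2) = Phi ((r i1)^2) ((r i2)^2) :=
    Jt_eq (r i1) (r i2) (hrne i1 hi1v) (hsq1 i1 hi1v) (hsq1 i2 hi2v)
  have e2 : Jt (r id1) (r id1 * r i1) = Phi ((r id1)^2) ((r i1)^2) :=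
    Jt_eq (r id1) (r i1) (hrne id1 hid1v) (hsq1 id1 hid1v) (hsq1 i1 hi1v)
  -- lower bound
  have hlow : ∀ x ∈ { x : ℝ | ∃ (u v : Fin d) (p : (starGraph d).Walk u v), p.IsPath ∧ u ≠ v ∧
      ¬ (starGraph d).Adj u v ∧ ∃ e ∈ p.edges, x = Jt (starRho d r e) ((p.edges.map (starRho d r)).prod) },
      min (Jt (r i1) (r i1 * r i2)) (Jt (r id1) (r id1 * r i1)) ≤ x := by
    intro x hx
    obtain ⟨u, v, hu, hv, huv, rfl⟩ := star_mem_class d r x hx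
    rw [Jt_eq (r u) (r v) (hrne u hu) (hsq1 u hu) (hsq1 v hv)]
    by_cases hui : u = i1
    · subst hui
      have hv2 : i2 ≤ v := by
        rw [Fin.le_def]
        have hv1 : v.val ≠ 1 := by
          intro h
          apply huv
          apply Fin.ext
          simp [hi1, h]
        simp only [hi2]
        omega
      have hvle : (r v)^2 ≤ (r i2)^2 := hsqle i2 v (by simp [hi2]) hv2
      have step : Phi ((r i1)^2) ((r i2)^2) ≤ Phi ((r i1)^2) ((r v)^2) :=
        PhiL1 ((r i1)^2) ((r v)^2) ((r i2)^2) (hsqpos i1 hi1v) (hsq1 i1 hi1v)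
          (hsqpos v hv) hvle (hsq1 i2 hi2v)
      calc min (Jt (r i1) (r i1 * r i2)) (Jt (r id1) (r id1 * r i1))
          ≤ Jt (r i1) (r i1 * r i2) := min_le_left _ _
      _ = Phi ((r i1)^2) ((r i2)^2) := e1
      _ ≤ Phi ((r i1)^2) ((r v)^2) := step
    · have hvle : (r v)^2 ≤ (r i1)^2 := hsqle i1 v (by simp [hi1]) (by
        rw [Fin.le_def]; simp [hi1]; omega)
      have hule : (r u)^2 ≤ (r i1)^2 := hsqle i1 u (by simp [hi1]) (by
        rw [Fin.le_def]; simp [hi1]; omega)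
      have hd1le : (r id1)^2 ≤ (r u)^2 := hsqle u id1 (by omega) (by
        rw [Fin.le_def]; simp [hid1]; omega)
      have step1 : Phi ((r u)^2) ((r i1)^2) ≤ Phi ((r u)^2) ((r v)^2) :=
        PhiL1 ((r u)^2) ((r v)^2) ((r i1)^2) (hsqpos u hu) (hsq1 u hu)
          (hsqpos v hv) hvle (hsq1 i1 hi1v)
      have step2 : Phi ((r id1)^2) ((r i1)^2) ≤ Phi ((r u)^2) ((r i1)^2) :=
        PhiL2 ((r id1)^2) ((r u)^2) ((r i1)^2) (hsqpos id1 hid1v) hd1le hule ht25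
      calc min (Jt (r i1) (r i1 * r i2)) (Jt (r id1) (r id1 * r i1))
          ≤ Jt (r id1) (r id1 * r i1) := min_le_right _ _
      _ = Phi ((r id1)^2) ((r i1)^2) := e2
      _ ≤ Phi ((r u)^2) ((r i1)^2) := step2
      _ ≤ Phi ((r u)^2) ((r v)^2) := step1
  -- memberships
  have hmem1 := star_pair_mem d r hd i1 i2 hi1v hi2v (by
    intro h
    have := congrArg Fin.val h
    simp [hi1, hi2] at this)
  have hmem2 := star_pair_mem d r hd id1 i1 hid1v hi1v (by
    intro h
    have := congrArg Fin.val h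
    simp [hid1, hi1] at this
    omega)
  have hbdd : BddBelow { x : ℝ | ∃ (u v : Fin d) (p : (starGraph d).Walk u v), p.IsPath ∧ u ≠ v ∧
      ¬ (starGraph d).Adj u v ∧ ∃ e ∈ p.edges, x = Jt (starRho d r e) ((p.edges.map (starRho d r)).prod) } :=
    ⟨min (Jt (r i1) (r i1 * r i2)) (Jt (r id1) (r id1 * r i1)), fun x hx => hlow x hx⟩
  apply le_antisymm
  · exact le_min (csInf_le hbdd hmem1) (csInf_le hbdd hmem2)
  · exact le_csInf ⟨_, hmem1⟩ hlow
end

section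
/- Let d ≥ 3 and let the star on d vertices carry edge correlations ρ₁,…,ρ_{d−1} ∈ (−1,1)∖{0} on its d−1 edges. Then the approximate error exponent of the star equals the minimum of the edge weights over all unordered pairs of distinct indices: K̃(star) = min over 1 ≤ i < j ≤ d−1 of W(ρ_i, ρ_j). In particular, K̃(star) does not depend on which edge of the star carries which correlation coefficient. -/
noncomputable def W (a b : ℝ) : ℝ := min (Jt a (a * b)) (Jt b (a * b))

lemma star_walk_edges {d : ℕ} {u v : Fin d} (hz : 0 < d) (p : (starGraph d).Walk u v)
    (hp : p.IsPath) (hu : u.val ≠ 0) (hv : v.val ≠ 0) (huv : u ≠ v) :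
    p.edges = [s(u, (⟨0, hz⟩ : Fin d)), s((⟨0, hz⟩ : Fin d), v)] := by
  cases p with
  | nil => exact absurd rfl huv
  | @cons _ x _ h q =>
    have hx : x = (⟨0, hz⟩ : Fin d) := by
      rcases h.2 with h0 | h0
      · exact absurd h0 hu
      · exact Fin.ext h0
    subst hx
    cases q with
    | nil => exact absurd rfl hv
    | @cons _ y _ h' q' =>
      have hq' : q'.IsPath := (hp.of_cons).of_cons
      have hy : y = v := by
        by_contra hne
        cases q' with
        | nil => exact hne rfl
        | @cons _ w2 _ h'' q'' =>
          have hnd := hp.support_nodup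
          simp [SimpleGraph.Walk.support_cons] at hnd
          have hzy := hnd.2.1.1
          have hzs := hnd.2.1.2
          rcases h''.2 with h0 | h0
          · exact hzy (Fin.ext h0).symm
          · have : w2 = (⟨0, hz⟩ : Fin d) := Fin.ext h0
            subst this
            exact hzs q''.start_mem_support
      subst hy
      have : q' = SimpleGraph.Walk.nil := SimpleGraph.Walk.isPath_iff_eq_nil.mp hq'
      subst this
      rfl

lemma starRho_eval {d : ℕ} (r : Fin d → ℝ) (hz : 0 < d) {u : Fin d} (hu : u.val ≠ 0) :
    starRho d r s(u, (⟨0, hz⟩ : Fin d)) = r u ∧ starRho d r s((⟨0, hz⟩ : Fin d), u) = r u := by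
  constructor <;> simp [starRho, hu]

lemma star_set_eq (d : ℕ) (hz : 0 < d) (r : Fin d → ℝ) :
    { x : ℝ | ∃ (u v : Fin d) (p : (starGraph d).Walk u v), p.IsPath ∧ u ≠ v ∧
        ¬ (starGraph d).Adj u v ∧
        ∃ e ∈ p.edges, x = Jt (starRho d r e) ((p.edges.map (starRho d r)).prod) }
      = { x : ℝ | ∃ v w : Fin d, v.val ≠ 0 ∧ w.val ≠ 0 ∧ v ≠ w ∧
          x = Jt (r v) (r v * r w) } := by
  ext x
  constructor
  · rintro ⟨u, v, p, hp, huv, hna, e, he, rfl⟩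
    have hu : u.val ≠ 0 ∧ v.val ≠ 0 := by
      by_contra hcon
      push_neg at hcon
      rcases Classical.em (u.val = 0) with h0 | h0
      · exact hna ⟨huv, Or.inl h0⟩
      · exact hna ⟨huv, Or.inr (hcon h0)⟩
    obtain ⟨hu, hv⟩ := hu
    have hed := star_walk_edges hz p hp hu hv huv
    rw [hed] at he ⊢
    have e1 := (starRho_eval r hz hu).1
    have e2 := (starRho_eval r hz hv).2
    simp only [List.map_cons, List.map_nil, List.prod_cons, List.prod_nil, e1, e2, mul_one]
    rcases List.mem_pair.mp he with rfl | rfl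
    · exact ⟨u, v, hu, hv, huv, by rw [e1]⟩
    · exact ⟨v, u, hv, hu, huv.symm, by rw [e2, mul_comm]⟩
  · rintro ⟨v, w, hv, hw, hvw, rfl⟩
    have hvz : v ≠ (⟨0, hz⟩ : Fin d) := by
      intro h; exact hv (by rw [h])
    have hwz : w ≠ (⟨0, hz⟩ : Fin d) := by
      intro h; exact hw (by rw [h])
    have h1 : (starGraph d).Adj v ⟨0, hz⟩ := ⟨hvz, Or.inr rfl⟩
    have h2 : (starGraph d).Adj (⟨0, hz⟩ : Fin d) w := ⟨fun h => hwz h.symm, Or.inl rfl⟩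
    refine ⟨v, w, SimpleGraph.Walk.cons h1 (SimpleGraph.Walk.cons h2 SimpleGraph.Walk.nil),
      ?_, hvw, ?_, s(v, (⟨0, hz⟩ : Fin d)), ?_, ?_⟩
    · rw [SimpleGraph.Walk.isPath_def]
      simp [SimpleGraph.Walk.support_cons]
      exact ⟨⟨hvz, hvw⟩, fun h => hwz h.symm⟩
    · rintro ⟨_, h0 | h0⟩
      · exact hv h0
      · exact hw h0
    · simp [SimpleGraph.Walk.edges_cons]
    · have e1 := (starRho_eval r hz hv).1
      have e2 := (starRho_eval r hz hw).2
      simp only [SimpleGraph.Walk.edges_cons, SimpleGraph.Walk.edges_nil,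
        List.map_cons, List.map_nil, List.prod_cons, List.prod_nil, e1, e2, mul_one]

lemma Ktilde_star (d : ℕ) (hz : 0 < d) (r : Fin d → ℝ) :
    Ktilde (starGraph d) (starRho d r)
      = sInf { x : ℝ | ∃ v w : Fin d, v.val ≠ 0 ∧ w.val ≠ 0 ∧ v ≠ w ∧
          x = Jt (r v) (r v * r w) } := by
  rw [Ktilde, star_set_eq d hz r]

/-- For the star on d ≥ 3 vertices with correlations r v on the edges {0, v}, the
approximate error exponent equals the minimum of the edge weights over all unordered pairs
of distinct indices; in particular it does not depend on which edge carries which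
correlation coefficient. -/
theorem star_Ktilde_eq (d : ℕ) (hd : 3 ≤ d) (r : Fin d → ℝ)
    (hr : ∀ v : Fin d, v.val ≠ 0 → r v ∈ Set.Ioo (-1 : ℝ) 1 ∧ r v ≠ 0) :
    Ktilde (starGraph d) (starRho d r)
      = sInf { x : ℝ | ∃ v w : Fin d, 0 < v.val ∧ v < w ∧ x = W (r v) (r w) }
    ∧ ∀ g : Equiv.Perm (Fin d), g ⟨0, by omega⟩ = ⟨0, by omega⟩ →
        Ktilde (starGraph d) (starRho d (r ∘ g)) = Ktilde (starGraph d) (starRho d r) := by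
  have hz : 0 < d := by omega
  set T' : Set ℝ := { x : ℝ | ∃ v w : Fin d, v.val ≠ 0 ∧ w.val ≠ 0 ∧ v ≠ w ∧
      x = Jt (r v) (r v * r w) } with hT'
  set T : Set ℝ := { x : ℝ | ∃ v w : Fin d, 0 < v.val ∧ v < w ∧ x = W (r v) (r w) } with hT
  -- boundedness via finiteness
  have hfin : T' ⊆ Set.range (fun p : Fin d × Fin d => Jt (r p.1) (r p.1 * r p.2)) := by
    rintro x ⟨v, w, _, _, _, rfl⟩; exact ⟨(v, w), rfl⟩
  have hbd' : BddBelow T' :=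
    ((Set.finite_range _).subset hfin).bddBelow
  have hTsub : T ⊆ T' := by
    rintro x ⟨v, w, hv0, hvw, rfl⟩
    have hw0 : w.val ≠ 0 := by
      have := lt_trans (show (0:ℕ) < v.val from hv0) (Fin.lt_iff_val_lt_val.mp hvw)
      omega
    have hne : v ≠ w := ne_of_lt hvw
    rcases min_cases (Jt (r v) (r v * r w)) (Jt (r w) (r v * r w)) with ⟨hmin, _⟩ | ⟨hmin, _⟩
    · exact ⟨v, w, by omega, hw0, hne, by rw [W, hmin]⟩
    · exact ⟨w, v, hw0, by omega, hne.symm, by rw [W, hmin, mul_comm]⟩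
  have hTne : T.Nonempty := by
    refine ⟨W (r ⟨1, by omega⟩) (r ⟨2, by omega⟩), ⟨1, by omega⟩, ⟨2, by omega⟩, ?_, ?_, rfl⟩
    · simp
    · simp [Fin.lt_iff_val_lt_val]
  have hbdT : BddBelow T := hbd'.mono hTsub
  have hle : ∀ x ∈ T', ∃ y ∈ T, y ≤ x := by
    rintro x ⟨v, w, hv, hw, hvw, rfl⟩
    rcases lt_or_gt_of_ne hvw with h | h
    · refine ⟨W (r v) (r w), ⟨v, w, Nat.pos_of_ne_zero hv, h, rfl⟩, ?_⟩
      exact min_le_left _ _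
    · refine ⟨W (r w) (r v), ⟨w, v, Nat.pos_of_ne_zero hw, h, rfl⟩, ?_⟩
      rw [W, mul_comm (r w) (r v)]
      exact min_le_right _ _
  have hinf : sInf T' = sInf T := by
    apply le_antisymm
    · exact csInf_le_csInf hbd' hTne hTsub
    · refine le_csInf (hTne.mono hTsub) ?_
      rintro x hx
      obtain ⟨y, hyT, hyx⟩ := hle x hx
      exact (csInf_le hbdT hyT).trans hyx
  constructor
  · rw [Ktilde_star d hz r, ← hT', hinf]
  · intro g hg
    rw [Ktilde_star d hz r, Ktilde_star d hz (r ∘ g)]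
    congr 1
    ext x
    have hgz : ∀ v : Fin d, v.val ≠ 0 → (g v).val ≠ 0 := by
      intro v hv h
      have : g v = g ⟨0, hz⟩ := by rw [hg]; exact Fin.ext h
      exact hv (congrArg Fin.val (g.injective this))
    have hgz' : ∀ v : Fin d, v.val ≠ 0 → (g.symm v).val ≠ 0 := by
      intro v hv h
      have : g.symm v = (⟨0, hz⟩ : Fin d) := Fin.ext h
      apply hv
      have := congrArg g this
      rw [Equiv.apply_symm_apply, hg] at this
      rw [this]
    constructor
    · rintro ⟨v, w, hv, hw, hvw, rfl⟩
      exact ⟨g v, g w, hgz v hv, hgz w hw, fun h => hvw (g.injective h), rfl⟩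
    · rintro ⟨v, w, hv, hw, hvw, rfl⟩
      refine ⟨g.symm v, g.symm w, hgz' v hv, hgz' w hw,
        fun h => hvw (g.symm.injective h), ?_⟩
      simp
end
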